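/- The similarity transform of the tangential Jacobian B by the eigenvectors of A yields the stated non-diagonal matrix: P⁻¹ B P = Θ, where Θ has rows (u_t, 0, -ρ c², 0), (0, u_t, 0, 0), (-1/(2ρ), 0, u_t, -1/(2ρ)), (0, 0, -ρ c², u_t). -/

import Mathlib

open Matrix
set_option maxHeartbeats 4000000

theorem similarity_transform_B
    (ρ c γ ux uy nx ny tx ty un ut uu H : ℝ)
    (hρ : 0 < ρ) (hc : 0 < c) (hγ : 1 < γ)
    (hn : nx^2 + ny^2 = 1)
    (htx : tx = -ny) (hty : ty = nx)
    (hun : un = ux*nx + uy*ny) (hut : ut = ux*tx + uy*ty)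
    (huu : uu = ux^2 + uy^2)
    (hH : H = c^2/(γ-1) + uu/2)
    (B P Pinv : Matrix (Fin 4) (Fin 4) ℝ)
    (hB : B = !![0, tx, ty, 0;
      (γ-1)/2*uu*tx - ux*ut, ut - (γ-2)*ux*tx, ux*ty - (γ-1)*uy*tx, (γ-1)*tx;
      (γ-1)/2*uu*ty - uy*ut, uy*tx - (γ-1)*ux*ty, ut - (γ-2)*uy*ty, (γ-1)*ty;
      ((γ-1)/2*uu - H)*ut, H*tx - (γ-1)*ux*ut, H*ty - (γ-1)*uy*ut, γ*ut])
    (hP : P = !![1/(2*c^2), 1/c^2, 0, 1/(2*c^2);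
      -nx/(2*c) + ux/(2*c^2), ux/c^2, ρ*ny, nx/(2*c) + ux/(2*c^2);
      -ny/(2*c) + uy/(2*c^2), uy/c^2, -ρ*nx, ny/(2*c) + uy/(2*c^2);
      1/(2*(γ-1)) - un/(2*c) + uu/(4*c^2), uu/(2*c^2), ρ*ux*ny - ρ*uy*nx, 1/(2*(γ-1)) + un/(2*c) + uu/(4*c^2)])
    (hPinv : Pinv = !![c*un + (γ-1)*uu/2, -c*nx + ux*(1-γ), -c*ny + uy*(1-γ), γ-1;
      c^2 - (γ-1)*uu/2, -(ux*(1-γ)), -(uy*(1-γ)), 1-γ;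
      -(ux*ny)/ρ + (uy*nx)/ρ, ny/ρ, -nx/ρ, 0;
      -(c*un) + (γ-1)*uu/2, c*nx + ux*(1-γ), c*ny + uy*(1-γ), γ-1]) :
    Pinv * B * P =
      !![ut, 0, -(ρ*c^2), 0;
         0, ut, 0, 0;
         -(1/(2*ρ)), 0, ut, -(1/(2*ρ));
         0, 0, -(ρ*c^2), ut] := by
  have hc2 : (c:ℝ) ≠ 0 := ne_of_gt hc
  have hρ2 : (ρ:ℝ) ≠ 0 := ne_of_gt hρ
  have hγ2 : γ - 1 ≠ 0 := sub_ne_zero.mpr (ne_of_gt hγ)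
  subst hB hP hPinv
  simp only [htx, hty, hun, hut, huu, hH]
  ext i j
  fin_cases i <;> fin_cases j <;>
    simp only [Matrix.mul_apply, Fin.sum_univ_succ, Finset.sum_empty,
      Matrix.cons_val', Matrix.cons_val_zero, Matrix.cons_val_one, Matrix.head_cons,
      Matrix.empty_val', Matrix.cons_val_fin_one, Matrix.head_fin_const,
      Fin.isValue, Matrix.cons_val_succ, Matrix.of_apply, add_zero, Matrix.cons_val, Matrix.cons_val_zero', Matrix.cons_val_succ']
  · linear_combination (norm := (field_simp; ring)) ((uy*nx-ux*ny)/2) * hn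
  · linear_combination (norm := (field_simp; ring)) (0:ℝ) * hn
  · linear_combination (norm := (field_simp; ring)) (-(ρ*c^2)) * hn
  · linear_combination (norm := (field_simp; ring)) ((ux*ny-uy*nx)/2) * hn
  · linear_combination (norm := (field_simp; ring)) (0:ℝ) * hn
  · linear_combination (norm := (field_simp; ring)) (0:ℝ) * hn
  · linear_combination (norm := (field_simp; ring)) (0:ℝ) * hn
  · linear_combination (norm := (field_simp; ring)) (0:ℝ) * hn
  · linear_combination (norm := (field_simp; ring)) (-(1/(2*ρ))) * hn
  · linear_combination (norm := (field_simp; ring)) (0:ℝ) * hn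
  · linear_combination (norm := (field_simp; ring)) (uy*nx-ux*ny) * hn
  · linear_combination (norm := (field_simp; ring)) (-(1/(2*ρ))) * hn
  · linear_combination (norm := (field_simp; ring)) ((ux*ny-uy*nx)/2) * hn
  · linear_combination (norm := (field_simp; ring)) (0:ℝ) * hn
  · linear_combination (norm := (field_simp; ring)) (-(ρ*c^2)) * hn
  · linear_combination (norm := (field_simp; ring)) ((uy*nx-ux*ny)/2) * hn
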